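/- Let k ≥ 1 and let X ⊆ ℝᵏ be a Lebesgue-measurable set with 0 < λ(X) < ∞, where λ denotes Lebesgue measure. Let n ≥ 1 and let μ₁, …, μₙ be finite measures on the measurable subsets of X, each absolutely continuous with respect to λ, with μᵢ(X) = D for every i, where D is a positive real number. Let d₁, …, dₙ be positive real numbers with d₁ + ⋯ + dₙ = D. Then there exists a measurable partition X₁, …, Xₙ of X (pairwise disjoint measurable pieces whose union is X) such that μᵢ(Xᵢ) ≥ dᵢ for every i. -/

import Mathlib

open MeasureTheory Set Filter Topology ENNReal

namespace CakeDiv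

variable {k : ℕ}

lemma measurable_halfline (z : Fin k) (s : ℝ) : MeasurableSet {x : Fin k → ℝ | x z ≤ s} :=
  measurableSet_le (measurable_pi_apply z) measurable_const

lemma slab_volume (z : Fin k) (s : ℝ) : volume {x : Fin k → ℝ | x z = s} = 0 := by
  have h : {x : Fin k → ℝ | x z = s}
      = Set.pi Set.univ (fun i => if i = z then {s} else Set.univ) := by
    ext x
    simp only [Set.mem_setOf_eq, Set.mem_pi, Set.mem_univ, forall_true_left]
    constructor
    · intro h i
      by_cases hi : i = z <;> simp [hi, h]
    · intro h
      have := h z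
      simpa using this
  rw [h, volume_pi_pi]
  exact Finset.prod_eq_zero (Finset.mem_univ z) (by simp)

lemma slab_null (z : Fin k) (μ : Measure (Fin k → ℝ)) (hac : μ ≪ volume) (s : ℝ) :
    μ {x : Fin k → ℝ | x z = s} = 0 :=
  hac (slab_volume z s)


/-- Sierpiński-type: within a measurable set `J`, any value `δ ≤ μ J` is attained
by a measurable subset, for `μ` finite and absolutely continuous wrt volume. -/
lemma sweep (z : Fin k) (μ : Measure (Fin k → ℝ)) [IsFiniteMeasure μ] (hac : μ ≪ volume)
    {J : Set (Fin k → ℝ)} (hJ : MeasurableSet J) {δ : ℝ≥0∞} (hδ : δ ≤ μ J) :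
    ∃ K, K ⊆ J ∧ MeasurableSet K ∧ μ K = δ := by
  rcases eq_or_lt_of_le hδ with hδJ | hδJ
  · exact ⟨J, Subset.rfl, hJ, hδJ.symm⟩
  rcases eq_or_lt_of_le (show (0:ℝ≥0∞) ≤ δ from zero_le) with hδ0 | hδ0
  · exact ⟨∅, empty_subset _, MeasurableSet.empty, by simp [hδ0.symm]⟩
  set F : ℝ → ℝ≥0∞ := fun s => μ (J ∩ {x | x z ≤ s}) with hF
  have hFmono : Monotone F := by
    intro s t hst
    exact measure_mono (inter_subset_inter_right _ (fun x hx => le_trans hx hst))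
  -- existence of a point where F < δ
  have ha : ∃ a : ℝ, F a < δ := by
    have hanti : Antitone (fun n : ℕ => J ∩ {x | x z ≤ -(n:ℝ)}) := by
      intro m n hmn
      refine inter_subset_inter_right _ (fun x hx => ?_)
      simp only [mem_setOf_eq] at hx ⊢
      have h' : (m:ℝ) ≤ n := by exact_mod_cast hmn
      linarith
    have hiempty : (⋂ n : ℕ, J ∩ {x | x z ≤ -(n:ℝ)}) = ∅ := by
      ext x
      simp only [mem_iInter, mem_inter_iff, mem_setOf_eq, mem_empty_iff_false, iff_false]
      intro h
      obtain ⟨n, hn⟩ := exists_nat_gt (-(x z))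
      exact absurd (h n).2 (by linarith)
    have ht := tendsto_measure_iInter_atTop
      (μ := μ) (s := fun n : ℕ => J ∩ {x | x z ≤ -(n:ℝ)})
      (fun n => (hJ.inter (measurable_halfline z _)).nullMeasurableSet) hanti
      ⟨0, measure_ne_top μ _⟩
    rw [hiempty] at ht
    simp only [measure_empty] at ht
    have := ht.eventually_lt_const hδ0
    rcases this.exists with ⟨n, hn⟩
    exact ⟨-(n:ℝ), hn⟩
  -- existence of a point where δ < F
  have hb : ∃ b : ℝ, δ < F b := by
    have hmono : Monotone (fun n : ℕ => J ∩ {x | x z ≤ (n:ℝ)}) := by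
      intro m n hmn
      refine inter_subset_inter_right _ (fun x hx => ?_)
      simp only [mem_setOf_eq] at hx ⊢
      have h' : (m:ℝ) ≤ n := by exact_mod_cast hmn
      linarith
    have hiun : (⋃ n : ℕ, J ∩ {x | x z ≤ (n:ℝ)}) = J := by
      ext x
      simp only [mem_iUnion, mem_inter_iff, mem_setOf_eq]
      constructor
      · rintro ⟨n, hn, _⟩; exact hn
      · intro hx
        obtain ⟨n, hn⟩ := exists_nat_gt (x z)
        exact ⟨n, hx, hn.le⟩
    have ht := tendsto_measure_iUnion_atTop (μ := μ) hmono
    rw [hiun] at ht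
    have := ht.eventually_const_lt hδJ
    rcases this.exists with ⟨n, hn⟩
    exact ⟨(n:ℝ), hn⟩
  obtain ⟨a, haF⟩ := ha
  obtain ⟨b, hbF⟩ := hb
  set S : Set ℝ := {s | F s ≤ δ} with hS
  have hSne : S.Nonempty := ⟨a, haF.le⟩
  have hSbdd : BddAbove S := by
    refine ⟨b, fun s hs => ?_⟩
    by_contra hsb
    push_neg at hsb
    exact absurd (lt_of_lt_of_le hbF (le_trans (hFmono hsb.le) hs)) (lt_irrefl _)
  set c : ℝ := sSup S with hc
  have hdown : ∀ s < c, F s ≤ δ := by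
    intro s hs
    obtain ⟨s', hs'S, hss'⟩ := exists_lt_of_lt_csSup hSne hs
    exact le_trans (hFmono hss'.le) hs'S
  have hFc_le : F c ≤ δ := by
    have h1 : μ (J ∩ {x | x z ≤ c}) ≤ μ (J ∩ {x | x z < c}) + μ {x : Fin k → ℝ | x z = c} := by
      refine le_trans (measure_mono ?_) (measure_union_le _ _)
      intro x hx
      rcases lt_or_eq_of_le (show x z ≤ c from hx.2) with h | h
      · exact Or.inl ⟨hx.1, h⟩
      · exact Or.inr h
    rw [slab_null z μ hac, add_zero] at h1
    refine le_trans h1 ?_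
    have hun : (J ∩ {x | x z < c}) = ⋃ n : ℕ, J ∩ {x | x z ≤ c - 1/(n+1)} := by
      ext x
      simp only [mem_iUnion, mem_inter_iff, mem_setOf_eq]
      constructor
      · rintro ⟨hxJ, hxc⟩
        obtain ⟨n, hn⟩ := exists_nat_one_div_lt (show (0:ℝ) < c - x z by linarith)
        exact ⟨n, hxJ, by linarith⟩
      · rintro ⟨n, hxJ, hxc⟩
        refine ⟨hxJ, lt_of_le_of_lt hxc ?_⟩
        have : (0:ℝ) < 1/(n+1) := by positivity
        linarith
    rw [hun]
    have hm : Monotone (fun n : ℕ => J ∩ {x | x z ≤ c - 1/(n+1)}) := by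
      intro m n hmn
      refine inter_subset_inter_right _ (fun x hx => ?_)
      simp only [mem_setOf_eq] at hx ⊢
      have h' : (1:ℝ)/(n+1) ≤ 1/(m+1) := by
        apply one_div_le_one_div_of_le (by positivity)
        have : (m:ℝ) ≤ n := by exact_mod_cast hmn
        linarith
      linarith
    have ht := tendsto_measure_iUnion_atTop (μ := μ) hm
    refine le_of_tendsto' ht (fun n => ?_)
    have : c - 1/(n+1) < c := by
      have : (0:ℝ) < 1/(n+1) := by positivity
      linarith
    exact hdown _ this
  have hFc_ge : δ ≤ F c := by
    have hin : (J ∩ {x | x z ≤ c}) = ⋂ n : ℕ, J ∩ {x | x z ≤ c + 1/(n+1)} := by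
      ext x
      simp only [mem_iInter, mem_inter_iff, mem_setOf_eq]
      constructor
      · rintro ⟨hxJ, hxc⟩ n
        have : (0:ℝ) < 1/(n+1) := by positivity
        exact ⟨hxJ, by linarith⟩
      · intro h
        refine ⟨(h 0).1, ?_⟩
        by_contra hcx
        push_neg at hcx
        obtain ⟨n, hn⟩ := exists_nat_one_div_lt (show (0:ℝ) < x z - c by linarith)
        exact absurd ((h n).2) (by linarith)
    have hanti : Antitone (fun n : ℕ => J ∩ {x | x z ≤ c + 1/(n+1)}) := by
      intro m n hmn
      refine inter_subset_inter_right _ (fun x hx => ?_)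
      simp only [mem_setOf_eq] at hx ⊢
      have h' : (1:ℝ)/(n+1) ≤ 1/(m+1) := by
        apply one_div_le_one_div_of_le (by positivity)
        have : (m:ℝ) ≤ n := by exact_mod_cast hmn
        linarith
      linarith
    have ht := tendsto_measure_iInter_atTop (μ := μ)
      (fun n => (hJ.inter (measurable_halfline z _)).nullMeasurableSet) hanti
      ⟨0, measure_ne_top μ _⟩
    rw [← hin] at ht
    refine ge_of_tendsto' ht (fun n => ?_)
    have hnotS : c + 1/(n+1) ∉ S := by
      intro hmem
      have : c + 1/(n+1) ≤ c := le_csSup hSbdd hmem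
      have : (0:ℝ) < 1/(n+1) := by positivity
      linarith
    exact (not_le.mp hnotS).le
  exact ⟨J ∩ {x | x z ≤ c}, inter_subset_left, hJ.inter (measurable_halfline z _),
    le_antisymm hFc_le hFc_ge⟩


variable {Ω : Type*} [MeasurableSpace Ω]

/-- Cumulative dyadic sets: `dyad A half k j` is the "first `j/2^k` fraction" of `A`. -/
noncomputable def dyad (A : Set Ω) (half : Set Ω → Set Ω) : ℕ → ℕ → Set Ω
  | 0, j => if j = 0 then ∅ else A
  | (k+1), j =>
      if j % 2 = 0 then dyad A half k (j / 2)
      else dyad A half k (j / 2) ∪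
        half (dyad A half k (j / 2 + 1) \ dyad A half k (j / 2))

section dyad

variable {ι : Type*} (μ : ι → Measure Ω) [∀ i, IsFiniteMeasure (μ i)]
  {A : Set Ω} (hA : MeasurableSet A) {half : Set Ω → Set Ω}
  (hsub : ∀ B, MeasurableSet B → half B ⊆ B)
  (hmeas : ∀ B, MeasurableSet B → MeasurableSet (half B))
  (hval : ∀ B, MeasurableSet B → ∀ i, μ i (half B) = 2⁻¹ * μ i B)

include hA hmeas in
lemma dyad_meas : ∀ k j, MeasurableSet (dyad A half k j) := by
  intro k
  induction k with
  | zero =>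
    intro j
    simp only [dyad]
    split <;> [exact MeasurableSet.empty; exact hA]
  | succ k ih =>
    intro j
    simp only [dyad]
    split
    · exact ih _
    · exact (ih _).union (hmeas _ ((ih _).diff (ih _)))

include hA hmeas hsub in
lemma dyad_mono_succ : ∀ k j, dyad A half k j ⊆ dyad A half k (j+1) := by
  intro k
  induction k with
  | zero =>
    intro j
    simp only [dyad]
    split
    · exact empty_subset _
    · rw [if_neg (by omega)]
  | succ k ih =>
    intro j
    rcases Nat.even_or_odd j with ⟨a, rfl⟩ | ⟨a, rfl⟩
    · have h1 : (a + a) % 2 = 0 := by omega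
      have h2 : (a + a) / 2 = a := by omega
      have h3 : (a + a + 1) % 2 = 1 := by omega
      have h4 : (a + a + 1) / 2 = a := by omega
      simp only [dyad, h1, h2, h3, h4]
      norm_num
    · have h1 : (2*a + 1) % 2 = 1 := by omega
      have h2 : (2*a + 1) / 2 = a := by omega
      have h3 : (2*a + 1 + 1) % 2 = 0 := by omega
      have h4 : (2*a + 1 + 1) / 2 = a + 1 := by omega
      simp only [dyad, h1, h2, h3, h4]
      norm_num
      refine ⟨ih a, ?_⟩
      exact (hsub _ ((dyad_meas hA hmeas k (a+1)).diff (dyad_meas hA hmeas k a))).trans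
        diff_subset

include hA hmeas hsub in
lemma dyad_mono_j (k : ℕ) : Monotone (dyad A half k) :=
  monotone_nat_of_le_succ (dyad_mono_succ hA hsub hmeas k)

lemma dyad_zero : ∀ k, dyad A half k 0 = ∅ := by
  intro k
  induction k with
  | zero => simp [dyad]
  | succ k ih => simpa [dyad] using ih

include hA hmeas hsub in
lemma dyad_top : ∀ k j, 2^k ≤ j → dyad A half k j = A := by
  intro k
  induction k with
  | zero =>
    intro j hj
    simp only [dyad]
    rw [if_neg (by omega)]
  | succ k ih =>
    intro j hj
    rcases Nat.even_or_odd j with ⟨a, rfl⟩ | ⟨a, rfl⟩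
    · have h1 : (a + a) % 2 = 0 := by omega
      have h2 : (a + a) / 2 = a := by omega
      simp only [dyad, h1, h2]
      norm_num
      exact ih a (by omega)
    · have h1 : (2*a + 1) % 2 = 1 := by omega
      have h2 : (2*a + 1) / 2 = a := by omega
      simp only [dyad, h1, h2]
      norm_num
      have ha : 2^k ≤ a := by
        have : 2 * 2^k ≤ 2*a + 1 := by simpa [pow_succ, mul_comm] using hj
        omega
      rw [ih a ha, ih (a+1) (by omega), diff_self]
      have : half (∅ : Set Ω) = ∅ :=
        subset_empty_iff.mp (hsub ∅ MeasurableSet.empty)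
      rw [this, union_empty]

include hA hmeas hsub in
lemma dyad_subset : ∀ k j, dyad A half k j ⊆ A := by
  intro k j
  calc dyad A half k j ⊆ dyad A half k (max j (2^k)) :=
        dyad_mono_j hA hsub hmeas k (le_max_left _ _)
    _ = A := dyad_top hA hsub hmeas k _ (le_max_right _ _)

lemma dyad_compat (k j : ℕ) : dyad A half (k+1) (2*j) = dyad A half k j := by
  have h1 : (2*j) % 2 = 0 := by omega
  have h2 : (2*j) / 2 = j := by omega
  simp only [dyad, h1, h2, reduceIte]

include hA hmeas hsub hval in
lemma dyad_val : ∀ k j, j ≤ 2^k → ∀ i,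
    μ i (dyad A half k j) = ENNReal.ofReal ((j : ℝ) / 2^k) * μ i A := by
  intro k
  induction k with
  | zero =>
    intro j hj i
    interval_cases j
    · simp [dyad]
    · simp [dyad]
  | succ k ih =>
    intro j hj i
    rcases Nat.even_or_odd j with ⟨a, rfl⟩ | ⟨a, rfl⟩
    · have h2 : a + a = 2 * a := by omega
      rw [h2, dyad_compat, ih a (by omega) i]
      congr 2
      rw [pow_succ]
      push_cast
      ring
    · have h1 : (2*a + 1) % 2 = 1 := by omega
      have h2 : (2*a + 1) / 2 = a := by omega
      have ha1 : a + 1 ≤ 2^k := by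
        have : 2*a + 1 ≤ 2 * 2^k := by simpa [pow_succ, mul_comm] using hj
        omega
      simp only [dyad, h1, h2]
      norm_num
      have hdisj : Disjoint (dyad A half k a)
          (half (dyad A half k (a+1) \ dyad A half k a)) := by
        refine Set.disjoint_of_subset_right
          ((hsub _ ((dyad_meas hA hmeas k (a+1)).diff (dyad_meas hA hmeas k a))))
          disjoint_sdiff_right
      rw [measure_union hdisj (hmeas _ ((dyad_meas hA hmeas k (a+1)).diff
        (dyad_meas hA hmeas k a)))]
      rw [hval _ ((dyad_meas hA hmeas k (a+1)).diff (dyad_meas hA hmeas k a)) i]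
      rw [measure_diff (dyad_mono_succ hA hsub hmeas k a)
        (dyad_meas hA hmeas k a).nullMeasurableSet (measure_ne_top _ _)]
      rw [ih a (by omega) i, ih (a+1) ha1 i]
      have hstep : ENNReal.ofReal (((a:ℝ)+1) / 2^k) * μ i A
          - ENNReal.ofReal ((a:ℝ) / 2^k) * μ i A
          = ENNReal.ofReal (1 / 2^k) * μ i A := by
        rw [← ENNReal.sub_mul (fun _ _ => measure_ne_top _ _), ← ENNReal.ofReal_sub _
          (by positivity)]
        congr 2
        field_simp
        ring
      push_cast
      have h2inv : (2:ℝ≥0∞)⁻¹ = ENNReal.ofReal (1/2) := by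
        rw [ENNReal.ofReal_div_of_pos (by norm_num)]
        norm_num
      rw [hstep, ← mul_assoc, h2inv, ← ENNReal.ofReal_mul (by norm_num), ← add_mul,
        ← ENNReal.ofReal_add (by positivity) (by positivity)]
      have harith : (a:ℝ)/2^k + 1/2*(1/2^k) = (2*(a:ℝ)+1)/2^(k+1) := by
        rw [pow_succ]
        field_simp
      rw [harith]

end dyad

/-- A monotone family realizing all fractions of all measures simultaneously,
given a consensus-halving oracle. -/
lemma exists_monofam {ι : Type*} (μ : ι → Measure Ω) [∀ i, IsFiniteMeasure (μ i)]
    {A : Set Ω} (hA : MeasurableSet A)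
    (hhalf : ∀ B : Set Ω, MeasurableSet B →
      ∃ S, S ⊆ B ∧ MeasurableSet S ∧ ∀ i, μ i S = 2⁻¹ * μ i B) :
    ∃ f : ℝ → Set Ω, Monotone f ∧ (∀ t, MeasurableSet (f t)) ∧ (∀ t, f t ⊆ A) ∧
      (∀ t ≤ (0:ℝ), f t = ∅) ∧ (∀ t, (1:ℝ) ≤ t → f t = A) ∧
      (∀ t ∈ Icc (0:ℝ) 1, ∀ i, μ i (f t) = ENNReal.ofReal t * μ i A) := by
  classical
  set half : Set Ω → Set Ω := fun B => if h : MeasurableSet B then (hhalf B h).choose else ∅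
    with hhalfdef
  have hsub : ∀ B, MeasurableSet B → half B ⊆ B := by
    intro B hB; simp only [hhalfdef, dif_pos hB]; exact (hhalf B hB).choose_spec.1
  have hmeas : ∀ B, MeasurableSet B → MeasurableSet (half B) := by
    intro B hB; simp only [hhalfdef, dif_pos hB]; exact (hhalf B hB).choose_spec.2.1
  have hval : ∀ B, MeasurableSet B → ∀ i, μ i (half B) = 2⁻¹ * μ i B := by
    intro B hB; simp only [hhalfdef, dif_pos hB]; exact (hhalf B hB).choose_spec.2.2
  set f : ℝ → Set Ω := fun t => ⋃ m : ℕ, dyad A half m ⌊t * 2^m⌋₊ with hf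
  have hfloorle : ∀ t : ℝ, t ≤ 1 → ∀ m : ℕ, ⌊t * 2^m⌋₊ ≤ 2^m := by
    intro t ht m
    calc ⌊t * 2^m⌋₊ ≤ ⌊(2:ℝ)^m⌋₊ := Nat.floor_le_floor
          (by nlinarith [pow_pos (show (0:ℝ) < 2 by norm_num) m])
      _ = 2^m := by
          rw [show ((2:ℝ)^m) = ((2^m : ℕ) : ℝ) by push_cast; ring, Nat.floor_natCast]
  have hseqmono : ∀ t : ℝ, Monotone (fun m : ℕ => dyad A half m ⌊t * 2^m⌋₊) := by
    intro t
    apply monotone_nat_of_le_succ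
    intro m
    have h1 : dyad A half m ⌊t * 2^m⌋₊ = dyad A half (m+1) (2 * ⌊t * 2^m⌋₊) :=
      (dyad_compat m _).symm
    rw [h1]
    apply dyad_mono_j hA hsub hmeas
    rcases le_or_gt t 0 with ht | ht
    · have : t * 2^m ≤ 0 := mul_nonpos_of_nonpos_of_nonneg ht (by positivity)
      simp [Nat.floor_of_nonpos this]
    · apply Nat.le_floor
      push_cast
      have h2 : (⌊t * 2^m⌋₊ : ℝ) ≤ t * 2^m := Nat.floor_le (by positivity)
      have : t * 2^(m+1) = 2 * (t * 2^m) := by ring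
      rw [this]
      linarith
  refine ⟨f, ?_, ?_, ?_, ?_, ?_, ?_⟩
  · -- monotone in t
    intro s t hst
    apply iUnion_mono
    intro m
    exact dyad_mono_j hA hsub hmeas m
      (Nat.floor_le_floor (mul_le_mul_of_nonneg_right hst (by positivity)))
  · intro t
    exact MeasurableSet.iUnion (fun m => dyad_meas hA hmeas m _)
  · intro t
    exact iUnion_subset (fun m => dyad_subset hA hsub hmeas m _)
  · intro t ht
    have : ∀ m : ℕ, dyad A half m ⌊t * 2^m⌋₊ = ∅ := by
      intro m
      have : t * 2^m ≤ 0 := mul_nonpos_of_nonpos_of_nonneg ht (by positivity)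
      rw [Nat.floor_of_nonpos this, dyad_zero]
    simp only [hf, this, iUnion_empty]
  · intro t ht
    apply Subset.antisymm (iUnion_subset (fun m => dyad_subset hA hsub hmeas m _))
    intro x hx
    have h0 : dyad A half 0 ⌊t * 2^0⌋₊ = A := by
      apply dyad_top hA hsub hmeas
      apply Nat.le_floor
      push_cast
      simpa using ht
    exact mem_iUnion.mpr ⟨0, by rw [h0]; exact hx⟩
  · intro t ht i
    have htend := tendsto_measure_iUnion_atTop (μ := μ i) (hseqmono t)
    have hvals : ∀ m : ℕ, μ i (dyad A half m ⌊t * 2^m⌋₊)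
        = ENNReal.ofReal ((⌊t * 2^m⌋₊ : ℝ) / 2^m) * μ i A := by
      intro m
      exact dyad_val (μ := μ) (hsub := hsub) (hmeas := hmeas) hA hval m _ (hfloorle t ht.2 m) i
    have hreal : Tendsto (fun m : ℕ => (⌊t * 2^m⌋₊ : ℝ) / 2^m) atTop (𝓝 t) := by
      have hup : ∀ m : ℕ, (⌊t * 2^m⌋₊ : ℝ) / 2^m ≤ t := by
        intro m
        rw [div_le_iff₀ (by positivity)]
        exact Nat.floor_le (mul_nonneg ht.1 (by positivity))
      have hlo : ∀ m : ℕ, t - (1/2)^m ≤ (⌊t * 2^m⌋₊ : ℝ) / 2^m := by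
        intro m
        rw [sub_le_iff_le_add, div_add' _ _ _ (by positivity)]
        rw [le_div_iff₀ (by positivity)]
        have h1 := Nat.lt_floor_add_one (t * 2^m)
        have h2 : ((1:ℝ)/2)^m * 2^m = 1 := by
          rw [← mul_pow]; norm_num
        nlinarith [h1, h2]
      refine tendsto_of_tendsto_of_tendsto_of_le_of_le ?_ tendsto_const_nhds hlo hup
      have : Tendsto (fun m : ℕ => ((1:ℝ)/2)^m) atTop (𝓝 0) :=
        tendsto_pow_atTop_nhds_zero_of_lt_one (by norm_num) (by norm_num)
      simpa using tendsto_const_nhds.sub this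
    have henn : Tendsto (fun m : ℕ => ENNReal.ofReal ((⌊t * 2^m⌋₊ : ℝ) / 2^m) * μ i A)
        atTop (𝓝 (ENNReal.ofReal t * μ i A)) := by
      apply ENNReal.Tendsto.mul_const
      · exact (ENNReal.continuous_ofReal.tendsto t).comp hreal
      · exact Or.inr (measure_ne_top _ _)
    have hlim : Tendsto (fun m : ℕ => ENNReal.ofReal ((⌊t * 2^m⌋₊ : ℝ) / 2^m) * μ i A)
        atTop (𝓝 (μ i (⋃ m : ℕ, dyad A half m ⌊t * 2^m⌋₊))) :=
      Filter.Tendsto.congr hvals htend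
    have hft : μ i (f t) = μ i (⋃ m : ℕ, dyad A half m ⌊t * 2^m⌋₊) := rfl
    rw [hft]
    exact tendsto_nhds_unique hlim henn

/-- A monotone family of subsets of `A` realizing each fraction `t` of every `μ i`. -/
def IsMonoFam {Ω : Type*} [MeasurableSpace Ω] {ι : Type*} (μ : ι → Measure Ω)
    (A : Set Ω) (f : ℝ → Set Ω) : Prop :=
  Monotone f ∧ (∀ t, MeasurableSet (f t)) ∧ (∀ t, f t ⊆ A) ∧
  (∀ t ≤ (0:ℝ), f t = ∅) ∧ (∀ t, (1:ℝ) ≤ t → f t = A) ∧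
  (∀ t ∈ Icc (0:ℝ) 1, ∀ i, μ i (f t) = ENNReal.ofReal t * μ i A)

section realspace

variable {k : ℕ} {ι : Type*}

/-- Exchange lemma: between two sets with equal `μ`-values, any intermediate `ν`-value
is attained by a set with the same `μ`-values. -/
lemma exchange (z : Fin k) (μ : ι → Measure (Fin k → ℝ)) [∀ i, IsFiniteMeasure (μ i)]
    (ν : Measure (Fin k → ℝ)) [IsFiniteMeasure ν] (hνac : ν ≪ volume)
    (hfam : ∀ A : Set (Fin k → ℝ), MeasurableSet A → ∃ f, IsMonoFam μ A f)
    {B C : Set (Fin k → ℝ)} (hB : MeasurableSet B) (hC : MeasurableSet C)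
    (hBC : ∀ i, μ i B = μ i C) {c : ℝ≥0∞} (hc1 : ν B ≤ c) (hc2 : c ≤ ν C) :
    ∃ S, S ⊆ B ∪ C ∧ MeasurableSet S ∧ (∀ i, μ i S = μ i B) ∧ ν S = c := by
  have hcfin : c ≠ ⊤ := (lt_of_le_of_lt hc2 (measure_lt_top ν C)).ne
  set P : Set (Fin k → ℝ) := B \ C with hPdef
  set Q : Set (Fin k → ℝ) := C \ B with hQdef
  have hPm : MeasurableSet P := hB.diff hC
  have hQm : MeasurableSet Q := hC.diff hB
  have hPQ : ∀ i, μ i P = μ i Q := by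
    intro i
    have h1 : μ i (B ∩ C) + μ i (B \ C) = μ i B := measure_inter_add_diff B hC
    have h2 : μ i (C ∩ B) + μ i (C \ B) = μ i C := measure_inter_add_diff C hB
    rw [inter_comm] at h2
    rw [hBC i, ← h2] at h1
    exact (ENNReal.add_right_inj (measure_ne_top _ _)).mp h1
  obtain ⟨p, hpmono, hpmeas, hpsub, hp0, hp1, hpval⟩ := hfam P hPm
  obtain ⟨q, hqmono, hqmeas, hqsub, hq0, hq1, hqval⟩ := hfam Q hQm
  -- real-valued auxiliary function
  set φ : ℝ → ℝ := fun t => (ν B).toReal - (ν (p t)).toReal + (ν (q t)).toReal with hφdef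
  set cr : ℝ := c.toReal with hcrdef
  have hφ0 : φ 0 ≤ cr := by
    have : φ 0 = (ν B).toReal := by
      simp [hφdef, hp0 0 le_rfl, hq0 0 le_rfl]
    rw [this, hcrdef]
    exact ENNReal.toReal_le_toReal (measure_ne_top _ _) hcfin |>.mpr hc1
  set T : Set ℝ := {t ∈ Icc (0:ℝ) 1 | φ t ≤ cr} with hTdef
  have h0T : (0:ℝ) ∈ T := ⟨⟨le_rfl, zero_le_one⟩, hφ0⟩
  have hTne : T.Nonempty := ⟨0, h0T⟩
  have hTbdd : BddAbove T := ⟨1, fun t ht => ht.1.2⟩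
  set t₀ : ℝ := sSup T with ht₀def
  have ht₀mem : t₀ ∈ Icc (0:ℝ) 1 :=
    ⟨le_csSup hTbdd h0T, csSup_le hTne (fun t ht => ht.1.2)⟩
  -- monotone sequence in T tending to t₀
  obtain ⟨w, hwmono, hwtend, hwT⟩ := exists_seq_tendsto_sSup hTne hTbdd
  have hwIcc : ∀ m, w m ∈ Icc (0:ℝ) 1 := fun m => (hwT m).1
  have hwle : ∀ m, w m ≤ t₀ := fun m => le_csSup hTbdd (hwT m)
  set Pm : Set (Fin k → ℝ) := ⋃ m, p (w m) with hPmdef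
  set Qm : Set (Fin k → ℝ) := ⋃ m, q (w m) with hQmdef
  have hPmm : MeasurableSet Pm := MeasurableSet.iUnion (fun m => hpmeas _)
  have hQmm : MeasurableSet Qm := MeasurableSet.iUnion (fun m => hqmeas _)
  have hPmP : Pm ⊆ p t₀ := iUnion_subset (fun m => hpmono (hwle m))
  have hQmQt : Qm ⊆ q t₀ := iUnion_subset (fun m => hqmono (hwle m))
  have hPmval : ∀ i, μ i Pm = ENNReal.ofReal t₀ * μ i P := by
    intro i
    have h1 : Tendsto (fun m => μ i (p (w m))) atTop (𝓝 (μ i Pm)) :=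
      tendsto_measure_iUnion_atTop (hpmono.comp hwmono)
    have h2 : Tendsto (fun m => μ i (p (w m))) atTop (𝓝 (ENNReal.ofReal t₀ * μ i P)) := by
      refine Filter.Tendsto.congr (fun m => (hpval _ (hwIcc m) i).symm) ?_
      exact ENNReal.Tendsto.mul_const ((ENNReal.continuous_ofReal.tendsto _).comp hwtend)
        (Or.inr (measure_ne_top _ _))
    exact tendsto_nhds_unique h1 h2
  have hQmval : ∀ i, μ i Qm = ENNReal.ofReal t₀ * μ i Q := by
    intro i
    have h1 : Tendsto (fun m => μ i (q (w m))) atTop (𝓝 (μ i Qm)) :=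
      tendsto_measure_iUnion_atTop (hqmono.comp hwmono)
    have h2 : Tendsto (fun m => μ i (q (w m))) atTop (𝓝 (ENNReal.ofReal t₀ * μ i Q)) := by
      refine Filter.Tendsto.congr (fun m => (hqval _ (hwIcc m) i).symm) ?_
      exact ENNReal.Tendsto.mul_const ((ENNReal.continuous_ofReal.tendsto _).comp hwtend)
        (Or.inr (measure_ne_top _ _))
    exact tendsto_nhds_unique h1 h2
  -- ν-limits from below
  have hνPm : Tendsto (fun m => (ν (p (w m))).toReal) atTop (𝓝 ((ν Pm).toReal)) :=
    (ENNReal.tendsto_toReal (measure_ne_top _ _)).comp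
      (tendsto_measure_iUnion_atTop (hpmono.comp hwmono))
  have hνQm : Tendsto (fun m => (ν (q (w m))).toReal) atTop (𝓝 ((ν Qm).toReal)) :=
    (ENNReal.tendsto_toReal (measure_ne_top _ _)).comp
      (tendsto_measure_iUnion_atTop (hqmono.comp hwmono))
  have hφm_le : (ν B).toReal - (ν Pm).toReal + (ν Qm).toReal ≤ cr := by
    have htend : Tendsto (fun m => φ (w m)) atTop
        (𝓝 ((ν B).toReal - (ν Pm).toReal + (ν Qm).toReal)) :=
      (tendsto_const_nhds.sub hνPm).add hνQm
    exact le_of_tendsto htend (Eventually.of_forall (fun m => (hwT m).2))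
  -- upper bundle
  obtain ⟨Pp, Qp, hPpm, hQpm, hPmPp, hQmQp, hQpQ, hQpval, hφp⟩ :
      ∃ Pp Qp : Set (Fin k → ℝ), MeasurableSet Pp ∧ MeasurableSet Qp ∧ Pm ⊆ Pp ∧ Qm ⊆ Qp ∧
        Qp ⊆ Q ∧ (∀ i, μ i Qp = ENNReal.ofReal t₀ * μ i Q) ∧
        cr ≤ (ν B).toReal - (ν Pp).toReal + (ν Qp).toReal := by
    rcases eq_or_lt_of_le ht₀mem.2 with ht1 | ht1
    · -- t₀ = 1 : use P, Q themselves
      refine ⟨P, Q, hPm, hQm, (hPmP.trans (hpsub _)), (hQmQt.trans (hqsub _)), Subset.rfl,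
        ?_, ?_⟩
      · intro i; rw [ht1]; simp
      · have e1 : (ν B).toReal = (ν (B ∩ C)).toReal + (ν P).toReal := by
          rw [← ENNReal.toReal_add (measure_ne_top _ _) (measure_ne_top _ _),
            measure_inter_add_diff B hC]
        have e2 : (ν C).toReal = (ν (B ∩ C)).toReal + (ν Q).toReal := by
          rw [← ENNReal.toReal_add (measure_ne_top _ _) (measure_ne_top _ _)]
          rw [show B ∩ C = C ∩ B from inter_comm _ _, measure_inter_add_diff C hB]
        have e3 : cr ≤ (ν C).toReal :=
          (ENNReal.toReal_le_toReal hcfin (measure_ne_top _ _)).mpr hc2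
        linarith
    · -- t₀ < 1 : intersect along a decreasing sequence
      set u : ℕ → ℝ := fun m => t₀ + (1 - t₀)/(m+1) with hudef
      have h1t : (0:ℝ) < 1 - t₀ := by linarith
      have hu_gt : ∀ m, t₀ < u m := by
        intro m
        have : (0:ℝ) < (1 - t₀)/(m+1) := div_pos h1t (by positivity)
        simp only [hudef]; linarith
      have hu_Icc : ∀ m, u m ∈ Icc (0:ℝ) 1 := by
        intro m
        refine ⟨ht₀mem.1.trans (hu_gt m).le, ?_⟩
        have h1 : (1 - t₀)/(m+1) ≤ 1 - t₀ :=
          div_le_self (by linarith) (by push_cast; linarith [Nat.cast_nonneg (α := ℝ) m])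
        simp only [hudef]; linarith
      have hu_anti : Antitone u := by
        intro a b hab
        simp only [hudef, div_eq_mul_inv]
        have hinv : ((b:ℝ)+1)⁻¹ ≤ ((a:ℝ)+1)⁻¹ := by
          apply inv_anti₀
          · positivity
          · exact_mod_cast Nat.succ_le_succ hab
        have := mul_le_mul_of_nonneg_left hinv h1t.le
        linarith
      have hu_tend : Tendsto u atTop (𝓝 t₀) := by
        have h1 : Tendsto (fun m : ℕ => (1 - t₀) * (1/(m+1))) atTop (𝓝 ((1 - t₀) * 0)) :=
          tendsto_const_nhds.mul tendsto_one_div_add_atTop_nhds_zero_nat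
        have := (tendsto_const_nhds : Tendsto (fun _ : ℕ => t₀) atTop (𝓝 t₀)).add h1
        simp only [mul_zero, add_zero] at this
        refine this.congr (fun m => ?_)
        simp only [hudef]; ring
      have hu_notT : ∀ m, cr < φ (u m) := by
        intro m
        by_contra hcon
        push_neg at hcon
        have : u m ∈ T := ⟨hu_Icc m, hcon⟩
        exact absurd (le_csSup hTbdd this) (not_le.mpr (hu_gt m))
      set Pp : Set (Fin k → ℝ) := ⋂ m, p (u m) with hPpdef
      set Qp : Set (Fin k → ℝ) := ⋂ m, q (u m) with hQpdef
      have hPpm : MeasurableSet Pp := MeasurableSet.iInter (fun m => hpmeas _)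
      have hQpm : MeasurableSet Qp := MeasurableSet.iInter (fun m => hqmeas _)
      have hpanti : Antitone (fun m => p (u m)) := fun a b hab => hpmono (hu_anti hab)
      have hqanti : Antitone (fun m => q (u m)) := fun a b hab => hqmono (hu_anti hab)
      have hνPp : Tendsto (fun m => (ν (p (u m))).toReal) atTop (𝓝 ((ν Pp).toReal)) :=
        (ENNReal.tendsto_toReal (measure_ne_top _ _)).comp
          (tendsto_measure_iInter_atTop (fun m => (hpmeas _).nullMeasurableSet) hpanti
            ⟨0, measure_ne_top _ _⟩)
      have hνQp : Tendsto (fun m => (ν (q (u m))).toReal) atTop (𝓝 ((ν Qp).toReal)) :=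
        (ENNReal.tendsto_toReal (measure_ne_top _ _)).comp
          (tendsto_measure_iInter_atTop (fun m => (hqmeas _).nullMeasurableSet) hqanti
            ⟨0, measure_ne_top _ _⟩)
      refine ⟨Pp, Qp, hPpm, hQpm, ?_, ?_, ?_, ?_, ?_⟩
      · exact subset_iInter (fun m => hPmP.trans (hpmono (hu_gt m).le))
      · exact subset_iInter (fun m => hQmQt.trans (hqmono (hu_gt m).le))
      · exact (iInter_subset _ 0).trans (hqsub _)
      · intro i
        have h1 : Tendsto (fun m => μ i (q (u m))) atTop (𝓝 (μ i Qp)) :=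
          tendsto_measure_iInter_atTop (fun m => (hqmeas _).nullMeasurableSet) hqanti
            ⟨0, measure_ne_top _ _⟩
        have h2 : Tendsto (fun m => μ i (q (u m))) atTop (𝓝 (ENNReal.ofReal t₀ * μ i Q)) := by
          refine Filter.Tendsto.congr (fun m => (hqval _ (hu_Icc m) i).symm) ?_
          exact ENNReal.Tendsto.mul_const ((ENNReal.continuous_ofReal.tendsto _).comp hu_tend)
            (Or.inr (measure_ne_top _ _))
        exact tendsto_nhds_unique h1 h2
      · have htend : Tendsto (fun m => φ (u m)) atTop
            (𝓝 ((ν B).toReal - (ν Pp).toReal + (ν Qp).toReal)) :=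
          (tendsto_const_nhds.sub hνPp).add hνQp
        exact ge_of_tendsto htend (Eventually.of_forall (fun m => (hu_notT m).le))
  -- the exchange set
  set δ : ℝ := cr - ((ν B).toReal - (ν Pm).toReal + (ν Qm).toReal) with hδdef
  have hδ0 : 0 ≤ δ := by simp only [hδdef]; linarith
  have hPmp_le : (ν Pm).toReal ≤ (ν Pp).toReal :=
    ENNReal.toReal_le_toReal (measure_ne_top _ _) (measure_ne_top _ _) |>.mpr
      (measure_mono hPmPp)
  have hδle : δ ≤ (ν Qp).toReal - (ν Qm).toReal := by
    simp only [hδdef]; linarith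
  have hdiffval : ν (Qp \ Qm) = ν Qp - ν Qm :=
    measure_diff hQmQp hQmm.nullMeasurableSet (measure_ne_top _ _)
  have hKle : ENNReal.ofReal δ ≤ ν (Qp \ Qm) := by
    rw [hdiffval]
    refine ENNReal.ofReal_le_of_le_toReal ?_
    rw [ENNReal.toReal_sub_of_le (measure_mono hQmQp) (measure_ne_top _ _)]
    exact hδle
  obtain ⟨K, hKsub, hKm, hKval⟩ := sweep z ν hνac (hQpm.diff hQmm) hKle
  refine ⟨(B \ Pm) ∪ (Qm ∪ K), ?_, ?_, ?_, ?_⟩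
  · refine union_subset (diff_subset.trans subset_union_left) (union_subset ?_ ?_)
    · exact (hQmQt.trans (hqsub _)).trans (diff_subset.trans subset_union_right)
    · exact (hKsub.trans (diff_subset.trans hQpQ)).trans
        (diff_subset.trans subset_union_right)
  · exact (hB.diff hPmm).union (hQmm.union hKm)
  · intro i
    have hQmsubQ : Qm ⊆ Q := hQmQt.trans (hqsub _)
    have hKQ : K ⊆ Q := hKsub.trans (diff_subset.trans hQpQ)
    have hd1 : Disjoint (B \ Pm) (Qm ∪ K) := by
      refine Disjoint.mono diff_subset (union_subset hQmsubQ hKQ) ?_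
      exact disjoint_sdiff_right
    have hd2 : Disjoint Qm K := disjoint_sdiff_right.mono_right hKsub
    rw [measure_union hd1 (hQmm.union hKm), measure_union hd2 hKm]
    have hK0 : μ i K = 0 := by
      have h1 : μ i K ≤ μ i (Qp \ Qm) := measure_mono hKsub
      have h2 : μ i (Qp \ Qm) = μ i Qp - μ i Qm :=
        measure_diff hQmQp hQmm.nullMeasurableSet (measure_ne_top _ _)
      rw [h2, hQpval i, hQmval i, tsub_self] at h1
      exact le_antisymm h1 zero_le
    have hPmB : Pm ⊆ B := (hPmP.trans (hpsub _)).trans diff_subset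
    have hBPm : μ i (B \ Pm) = μ i B - ENNReal.ofReal t₀ * μ i P := by
      rw [measure_diff hPmB hPmm.nullMeasurableSet (measure_ne_top _ _), hPmval i]
    rw [hK0, add_zero, hBPm, hQmval i, ← hPQ i]
    refine tsub_add_cancel_of_le ?_
    calc ENNReal.ofReal t₀ * μ i P ≤ 1 * μ i P := by
          gcongr
          exact ENNReal.ofReal_le_one.mpr ht₀mem.2
      _ = μ i P := one_mul _
      _ ≤ μ i B := measure_mono diff_subset
  · -- ν-value equals c
    have hQmsubQ : Qm ⊆ Q := hQmQt.trans (hqsub _)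
    have hKQ : K ⊆ Q := hKsub.trans (diff_subset.trans hQpQ)
    have hd1 : Disjoint (B \ Pm) (Qm ∪ K) := by
      refine Disjoint.mono diff_subset (union_subset hQmsubQ hKQ) ?_
      exact disjoint_sdiff_right
    have hd2 : Disjoint Qm K := disjoint_sdiff_right.mono_right hKsub
    rw [measure_union hd1 (hQmm.union hKm), measure_union hd2 hKm, hKval]
    have hPmB : Pm ⊆ B := (hPmP.trans (hpsub _)).trans diff_subset
    have hBPm : ν (B \ Pm) = ν B - ν Pm :=
      measure_diff hPmB hPmm.nullMeasurableSet (measure_ne_top _ _)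
    have hfin1 : ν (B \ Pm) ≠ ⊤ := measure_ne_top _ _
    have hfin2 : ν Qm ≠ ⊤ := measure_ne_top _ _
    refine (ENNReal.toReal_eq_toReal_iff' (by finiteness) hcfin).mp ?_
    rw [ENNReal.toReal_add (by finiteness) (by finiteness),
      ENNReal.toReal_add (by finiteness) (by finiteness), ENNReal.toReal_ofReal hδ0, hBPm,
      ENNReal.toReal_sub_of_le (measure_mono hPmB) (measure_ne_top _ _)]
    simp only [hδdef, hcrdef]
    ring


/-- Step: consensus halving for one more measure. -/
lemma step (z : Fin k) (μ : ι → Measure (Fin k → ℝ)) [∀ i, IsFiniteMeasure (μ i)]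
    (ν : Measure (Fin k → ℝ)) [IsFiniteMeasure ν] (hνac : ν ≪ volume)
    (hfam : ∀ A : Set (Fin k → ℝ), MeasurableSet A → ∃ f, IsMonoFam μ A f)
    {A : Set (Fin k → ℝ)} (hA : MeasurableSet A) :
    ∃ S, S ⊆ A ∧ MeasurableSet S ∧ (∀ i, μ i S = ENNReal.ofReal (1/2) * μ i A) ∧
      ν S = ENNReal.ofReal (1/2) * ν A := by
  obtain ⟨f, hfmono, hfmeas, hfsub, hf0, hf1, hfval⟩ := hfam A hA
  -- the windows
  set W : ℝ → Set (Fin k → ℝ) := fun u =>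
    if u ≤ 1/2 then f (u + 1/2) \ f u else f (u - 1/2) ∪ (A \ f u) with hWdef
  have hWmeas : ∀ u, MeasurableSet (W u) := by
    intro u
    simp only [hWdef]
    split
    · exact (hfmeas _).diff (hfmeas _)
    · exact (hfmeas _).union (hA.diff (hfmeas _))
  have hWsub : ∀ u, W u ⊆ A := by
    intro u
    simp only [hWdef]
    split
    · exact diff_subset.trans (hfsub _)
    · exact union_subset (hfsub _) diff_subset
  have hWμ : ∀ u ∈ Icc (0:ℝ) 1, ∀ i, μ i (W u) = ENNReal.ofReal (1/2) * μ i A := by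
    rintro u ⟨hu0, hu1⟩ i
    simp only [hWdef]
    split
    · rename_i hu
      have hsub2 : f u ⊆ f (u + 1/2) := hfmono (by linarith)
      rw [measure_diff hsub2 (hfmeas u).nullMeasurableSet (measure_ne_top _ _),
        hfval _ ⟨by linarith, by linarith⟩ i, hfval _ ⟨hu0, hu1⟩ i]
      rw [ENNReal.ofReal_add hu0 (by norm_num), add_mul,
        ENNReal.add_sub_cancel_left (by finiteness)]
    · rename_i hu
      push_neg at hu
      have hsub2 : f (u - 1/2) ⊆ f u := hfmono (by linarith)
      have hdisj : Disjoint (f (u - 1/2)) (A \ f u) := disjoint_sdiff_right.mono_left hsub2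
      rw [measure_union hdisj (hA.diff (hfmeas u)),
        measure_diff (hfsub u) (hfmeas u).nullMeasurableSet (measure_ne_top _ _),
        hfval _ ⟨by linarith, by linarith⟩ i, hfval _ ⟨hu0, hu1⟩ i]
      have h3 : μ i A - ENNReal.ofReal u * μ i A = ENNReal.ofReal (1 - u) * μ i A := by
        rw [ENNReal.ofReal_sub _ hu0, ENNReal.sub_mul (fun _ _ => measure_ne_top _ _),
          ENNReal.ofReal_one, one_mul]
      rw [h3, ← add_mul, ← ENNReal.ofReal_add (by linarith) (by linarith)]
      have h4 : u - 1/2 + (1 - u) = 1/2 := by ring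
      rw [h4]
  -- real-valued analysis
  set g : ℝ → ℝ := fun u => (ν (f u)).toReal with hgdef
  set M : ℝ := (ν A).toReal with hMdef
  have hgmono : Monotone g := by
    intro a b hab
    exact ENNReal.toReal_le_toReal (measure_ne_top _ _) (measure_ne_top _ _) |>.mpr
      (measure_mono (hfmono hab))
  have hg0 : g 0 = 0 := by simp [hgdef, hf0 0 le_rfl]
  have hg1 : g 1 = M := by simp [hgdef, hf1 1 le_rfl, hMdef]
  set G : ℝ → ℝ := fun u => if u ≤ 1/2 then g (u + 1/2) else g (u - 1/2) + M with hGdef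
  have hgnonneg : ∀ u, 0 ≤ g u := fun u => ENNReal.toReal_nonneg
  have hgleM : ∀ u, g u ≤ M :=
    fun u => ENNReal.toReal_le_toReal (measure_ne_top _ _) (measure_ne_top _ _) |>.mpr
      (measure_mono (hfsub u))
  have hGmono : Monotone G := by
    intro a b hab
    simp only [hGdef]
    split <;> split
    · exact hgmono (by linarith)
    · rename_i h1 h2
      push_neg at h2
      have := hgleM (a + 1/2)
      have := hgnonneg (b - 1/2)
      linarith
    · rename_i h1 h2
      push_neg at h1
      linarith
    · have : g (a - 1/2) ≤ g (b - 1/2) := hgmono (by linarith)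
      linarith
  have hWν : ∀ u ∈ Icc (0:ℝ) 1, (ν (W u)).toReal = G u - g u := by
    rintro u ⟨hu0, hu1⟩
    simp only [hWdef, hGdef]
    split
    · rename_i hu
      have hsub2 : f u ⊆ f (u + 1/2) := hfmono (by linarith)
      rw [measure_diff hsub2 (hfmeas u).nullMeasurableSet (measure_ne_top _ _),
        ENNReal.toReal_sub_of_le (measure_mono hsub2) (measure_ne_top _ _)]
    · rename_i hu
      push_neg at hu
      have hsub2 : f (u - 1/2) ⊆ f u := hfmono (by linarith)
      have hdisj : Disjoint (f (u - 1/2)) (A \ f u) := disjoint_sdiff_right.mono_left hsub2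
      rw [measure_union hdisj (hA.diff (hfmeas u)),
        measure_diff (hfsub u) (hfmeas u).nullMeasurableSet (measure_ne_top _ _),
        ENNReal.toReal_add (measure_ne_top _ _) (by finiteness),
        ENNReal.toReal_sub_of_le (measure_mono (hfsub u)) (measure_ne_top _ _)]
      simp only [hgdef, hMdef]
      ring
  -- the integral identity
  have hint : ∫ u in (0:ℝ)..1, (G u - g u) = M/2 := by
    have hGi : IntervalIntegrable G volume 0 1 := hGmono.intervalIntegrable
    have hgi : IntervalIntegrable g volume 0 1 := hgmono.intervalIntegrable
    have hGi1 : IntervalIntegrable G volume 0 (1/2) := hGmono.intervalIntegrable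
    have hGi2 : IntervalIntegrable G volume (1/2) 1 := hGmono.intervalIntegrable
    rw [intervalIntegral.integral_sub hGi hgi]
    have e1 : ∫ u in (0:ℝ)..(1/2), G u = ∫ u in (0:ℝ)..(1/2), g (u + 1/2) := by
      refine intervalIntegral.integral_congr (fun u hu => ?_)
      rw [uIcc_of_le (by norm_num)] at hu
      simp only [hGdef]
      rw [if_pos hu.2]
    have e2 : ∫ u in (1/2:ℝ)..1, G u = ∫ u in (1/2:ℝ)..1, (g (u - 1/2) + M) := by
      refine intervalIntegral.integral_congr (fun u hu => ?_)
      rw [uIcc_of_le (by norm_num)] at hu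
      simp only [hGdef]
      rcases eq_or_lt_of_le hu.1 with h | h
      · rw [if_pos (le_of_eq h.symm), ← h]
        norm_num [hg1, hg0]
      · rw [if_neg (not_le.mpr h)]
    have e3 : ∫ u in (0:ℝ)..(1/2), g (u + 1/2) = ∫ u in (1/2:ℝ)..1, g u := by
      rw [intervalIntegral.integral_comp_add_right (f := g) ((1:ℝ)/2)]
      norm_num
    have e4 : ∫ u in (1/2:ℝ)..1, g (u - 1/2) = ∫ u in (0:ℝ)..(1/2), g u := by
      rw [intervalIntegral.integral_comp_sub_right (f := g) ((1:ℝ)/2)]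
      norm_num
    have hsplit : ∫ u in (0:ℝ)..1, G u
        = (∫ u in (0:ℝ)..(1/2), G u) + ∫ u in (1/2:ℝ)..1, G u :=
      (intervalIntegral.integral_add_adjacent_intervals hGi1 hGi2).symm
    have hsplitg : ∫ u in (0:ℝ)..1, g u
        = (∫ u in (0:ℝ)..(1/2), g u) + ∫ u in (1/2:ℝ)..1, g u :=
      (intervalIntegral.integral_add_adjacent_intervals
        hgmono.intervalIntegrable hgmono.intervalIntegrable).symm
    have e5 : ∫ u in (1/2:ℝ)..1, (g (u - 1/2) + M)
        = (∫ u in (0:ℝ)..(1/2), g u) + M/2 := by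
      rw [intervalIntegral.integral_add (by
          have : IntervalIntegrable (fun u => g (u - 1/2)) volume (1/2) 1 := by
            have : MonotoneOn (fun u : ℝ => g (u - 1/2)) (uIcc (1/2:ℝ) 1) :=
              fun a _ b _ hab => hgmono (by linarith)
            exact this.intervalIntegrable
          exact this) intervalIntegrable_const, e4,
        intervalIntegral.integral_const, smul_eq_mul]
      ring
    rw [hsplit, hsplitg, e1, e2, e3, e5]
    ring
  -- extract windows below and above the mean
  have hH : ∃ um ∈ Icc (0:ℝ) 1, (ν (W um)).toReal ≤ M/2 := by
    by_contra hcon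
    push_neg at hcon
    have hpos : ∀ u ∈ Ioo (0:ℝ) 1, 0 < (G u - g u) - M/2 := by
      intro u hu
      have h1 := hcon u ⟨hu.1.le, hu.2.le⟩
      rw [hWν u ⟨hu.1.le, hu.2.le⟩] at h1
      linarith
    have hIi : IntervalIntegrable (fun u => (G u - g u) - M/2) volume 0 1 :=
      (hGmono.intervalIntegrable.sub hgmono.intervalIntegrable).sub intervalIntegrable_const
    have := intervalIntegral.intervalIntegral_pos_of_pos_on hIi hpos (by norm_num)
    rw [intervalIntegral.integral_sub
      (hGmono.intervalIntegrable.sub hgmono.intervalIntegrable) intervalIntegrable_const,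
      hint, intervalIntegral.integral_const] at this
    norm_num at this
  have hH' : ∃ up ∈ Icc (0:ℝ) 1, M/2 ≤ (ν (W up)).toReal := by
    by_contra hcon
    push_neg at hcon
    have hpos : ∀ u ∈ Ioo (0:ℝ) 1, 0 < M/2 - (G u - g u) := by
      intro u hu
      have h1 := hcon u ⟨hu.1.le, hu.2.le⟩
      rw [hWν u ⟨hu.1.le, hu.2.le⟩] at h1
      linarith
    have hIi : IntervalIntegrable (fun u => M/2 - (G u - g u)) volume 0 1 :=
      intervalIntegrable_const.sub (hGmono.intervalIntegrable.sub hgmono.intervalIntegrable)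
    have := intervalIntegral.intervalIntegral_pos_of_pos_on hIi hpos (by norm_num)
    rw [intervalIntegral.integral_sub intervalIntegrable_const
      (hGmono.intervalIntegrable.sub hgmono.intervalIntegrable),
      hint, intervalIntegral.integral_const] at this
    norm_num at this
  obtain ⟨um, humIcc, hum⟩ := hH
  obtain ⟨up, hupIcc, hup⟩ := hH'
  -- apply the exchange lemma
  have hc1 : ν (W um) ≤ ENNReal.ofReal (1/2) * ν A := by
    have h2 : (ENNReal.ofReal (1/2) * ν A).toReal = M/2 := by
      rw [ENNReal.toReal_mul, ENNReal.toReal_ofReal (by norm_num), hMdef]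
      ring
    refine (ENNReal.toReal_le_toReal (measure_ne_top _ _) (by finiteness)).mp ?_
    rw [h2]
    exact hum
  have hc2 : ENNReal.ofReal (1/2) * ν A ≤ ν (W up) := by
    have h2 : (ENNReal.ofReal (1/2) * ν A).toReal = M/2 := by
      rw [ENNReal.toReal_mul, ENNReal.toReal_ofReal (by norm_num), hMdef]
      ring
    refine (ENNReal.toReal_le_toReal (by finiteness) (measure_ne_top _ _)).mp ?_
    rw [h2]
    exact hup
  have hBC : ∀ i, μ i (W um) = μ i (W up) := by
    intro i
    rw [hWμ um humIcc i, hWμ up hupIcc i]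
  obtain ⟨S, hSsub, hSm, hSμ, hSν⟩ := exchange z μ ν hνac hfam
    (hWmeas um) (hWmeas up) hBC hc1 hc2
  refine ⟨S, hSsub.trans (union_subset (hWsub um) (hWsub up)), hSm, ?_, hSν⟩
  intro i
  rw [hSμ i, hWμ um humIcc i]


/-- Main induction: monotone consensus families exist for any finite family of
finite, absolutely continuous measures. -/
lemma exists_monofam_all (z : Fin k) :
    ∀ (m : ℕ) (μ : Fin m → Measure (Fin k → ℝ)), (∀ i, IsFiniteMeasure (μ i)) →
      (∀ i, μ i ≪ volume) →
      ∀ A : Set (Fin k → ℝ), MeasurableSet A → ∃ f, IsMonoFam μ A f := by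
  intro m
  induction m with
  | zero =>
    intro μ _ _ A hA
    refine ⟨fun t => if 1 ≤ t then A else ∅, ?_, ?_, ?_, ?_, ?_, ?_⟩
    · intro s t hst
      show (if 1 ≤ s then A else ∅) ≤ (if 1 ≤ t then A else ∅)
      by_cases hs : 1 ≤ s
      · exact le_of_eq (by rw [if_pos hs, if_pos (hs.trans hst)])
      · rw [if_neg hs]
        exact empty_subset _
    · intro t
      beta_reduce
      split <;> [exact hA; exact MeasurableSet.empty]
    · intro t
      beta_reduce
      split <;> [exact Subset.rfl; exact empty_subset _]
    · intro t ht
      beta_reduce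
      rw [if_neg (by linarith)]
    · intro t ht
      beta_reduce
      rw [if_pos ht]
    · intro t ht i
      exact i.elim0
  | succ m ih =>
    intro μ hfin hac A hA
    haveI : ∀ i, IsFiniteMeasure (μ i) := hfin
    have ihfam := ih (fun i => μ i.succ) (fun i => hfin _) (fun i => hac _)
    have hhalf : ∀ B : Set (Fin k → ℝ), MeasurableSet B →
        ∃ S, S ⊆ B ∧ MeasurableSet S ∧ ∀ i : Fin (m+1), μ i S = 2⁻¹ * μ i B := by
      intro B hB
      obtain ⟨S, h1, h2, h3, h4⟩ := step z (fun i : Fin m => μ i.succ) (μ 0) (hac 0) ihfam hB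
      refine ⟨S, h1, h2, ?_⟩
      have h2inv : (2:ℝ≥0∞)⁻¹ = ENNReal.ofReal (1/2) := by
        rw [ENNReal.ofReal_div_of_pos (by norm_num)]
        norm_num
      intro i
      rw [h2inv]
      refine Fin.cases ?_ ?_ i
      · exact h4
      · intro j
        exact h3 j
    exact exists_monofam μ hA hhalf

end realspace


end CakeDiv

/-- Proportional cake cutting with unequal shares on a generalized cake:
a Lebesgue-measurable set `X ⊆ ℝᵏ` of finite positive volume can be partitioned
into measurable pieces so that each player, whose absolutely continuous finite
measure assigns value `D` to `X`, receives at least her demand. -/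
theorem proportional_division_exists_general
    (k : ℕ) (hk : 1 ≤ k) (X : Set (Fin k → ℝ))
    (hXm : MeasurableSet X) (hX0 : 0 < volume X) (hXfin : volume X < ⊤)
    (n : ℕ) (hn : 1 ≤ n) (D : ℝ) (hD : 0 < D)
    (μ : Fin n → Measure (Fin k → ℝ)) [∀ i, IsFiniteMeasure (μ i)]
    (hac : ∀ i, μ i ≪ volume)
    (htot : ∀ i, μ i X = ENNReal.ofReal D)
    (d : Fin n → ℝ) (hd : ∀ i, 0 < d i) (hsum : ∑ i, d i = D) :
    ∃ P : Fin n → Set (Fin k → ℝ),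
      (∀ i, MeasurableSet (P i)) ∧
      (∀ i, P i ⊆ X) ∧
      (∀ i j, i ≠ j → Disjoint (P i) (P j)) ∧
      (⋃ i, P i) = X ∧
      (∀ i, ENNReal.ofReal (d i) ≤ μ i (P i)) := by
  classical
  set z : Fin k := ⟨0, hk⟩
  set ν : Fin n → Measure (Fin k → ℝ) := fun i => (μ i).restrict X with hνdef
  haveI : ∀ i, IsFiniteMeasure (ν i) := fun i => by
    simp only [hνdef]; infer_instance
  have hνac : ∀ i, ν i ≪ volume := fun i =>
    (Measure.absolutelyContinuous_of_le Measure.restrict_le_self).trans (hac i)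
  obtain ⟨f, hfmono, hfmeas, hfsub, hf0, hf1, hfval⟩ :=
    CakeDiv.exists_monofam_all z n ν (fun i => inferInstance) hνac X hXm
  have hνX : ∀ i, ν i X = ENNReal.ofReal D := by
    intro i
    show (μ i).restrict X X = _
    rw [Measure.restrict_apply hXm, inter_self]
    exact htot i
  -- cumulative demand fractions
  set dd : ℕ → ℝ := fun j => if h : j < n then d ⟨j, h⟩ else 0 with hdd
  have hdd_nonneg : ∀ j, 0 ≤ dd j := by
    intro j
    simp only [hdd]
    split
    · exact (hd _).le
    · exact le_rfl
  set F : ℕ → ℝ := fun m => (∑ j ∈ Finset.range m, dd j) / D with hF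
  have hFnonneg : ∀ m, 0 ≤ F m := fun m =>
    div_nonneg (Finset.sum_nonneg (fun j _ => hdd_nonneg j)) hD.le
  have hFmono : Monotone F := by
    intro a b hab
    simp only [hF]
    have hs : ∑ j ∈ Finset.range a, dd j ≤ ∑ j ∈ Finset.range b, dd j :=
      Finset.sum_le_sum_of_subset_of_nonneg (Finset.range_subset_range.mpr hab)
        (fun j _ _ => hdd_nonneg j)
    gcongr
  have hF0 : F 0 = 0 := by simp [hF]
  have hFn : F n = 1 := by
    have hsum' : ∑ j ∈ Finset.range n, dd j = D := by
      rw [← Fin.sum_univ_eq_sum_range dd n, ← hsum]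
      apply Finset.sum_congr rfl
      intro i _
      simp only [hdd, i.isLt, dif_pos]
    simp only [hF, hsum']
    exact div_self hD.ne'
  have hFmem : ∀ m, m ≤ n → F m ∈ Icc (0:ℝ) 1 :=
    fun m hm => ⟨hFnonneg m, (hFmono hm).trans_eq hFn⟩
  have hFsucc : ∀ i : Fin n, F ((i:ℕ)+1) * D = F (i:ℕ) * D + d i := by
    intro i
    simp only [hF]
    rw [div_mul_cancel₀ _ hD.ne', div_mul_cancel₀ _ hD.ne', Finset.sum_range_succ]
    congr 1
    simp only [hdd, i.isLt, dif_pos]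
  set P : Fin n → Set (Fin k → ℝ) := fun i => f (F ((i:ℕ)+1)) \ f (F (i:ℕ)) with hP
  have hPm : ∀ i, MeasurableSet (P i) := fun i => (hfmeas _).diff (hfmeas _)
  have hPX : ∀ i, P i ⊆ X := fun i => diff_subset.trans (hfsub _)
  have hPdisj : ∀ i j : Fin n, i ≠ j → Disjoint (P i) (P j) := by
    have key : ∀ i j : Fin n, (i:ℕ) < (j:ℕ) → Disjoint (P i) (P j) := by
      intro i j hij
      have h1 : P i ⊆ f (F (j:ℕ)) :=
        diff_subset.trans (hfmono (hFmono hij))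
      exact disjoint_sdiff_right.mono_left h1
    intro i j hij
    rcases lt_or_gt_of_ne (fun h => hij (Fin.val_injective h)) with h | h
    · exact key i j h
    · exact (key j i h).symm
  have hPcover : (⋃ i, P i) = X := by
    apply Subset.antisymm (iUnion_subset (fun i => hPX i))
    intro x hx
    have hex : ∃ m, x ∈ f (F m) := ⟨n, by rw [hf1 _ hFn.ge]; exact hx⟩
    have hm₀ : x ∈ f (F (Nat.find hex)) := Nat.find_spec hex
    have hm₀pos : 0 < Nat.find hex := by
      rcases Nat.eq_zero_or_pos (Nat.find hex) with h | h
      · exfalso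
        rw [h] at hm₀
        rw [hF0, hf0 0 le_rfl] at hm₀
        exact hm₀
      · exact h
    have hm₀n : Nat.find hex ≤ n := Nat.find_le (by rw [hf1 _ hFn.ge]; exact hx)
    refine mem_iUnion.mpr ⟨⟨Nat.find hex - 1, by omega⟩, ?_, ?_⟩
    · show x ∈ f (F ((Nat.find hex - 1) + 1))
      have : Nat.find hex - 1 + 1 = Nat.find hex := by omega
      rw [this]
      exact hm₀
    · show x ∉ f (F (Nat.find hex - 1))
      intro hcon
      exact Nat.find_min hex (by omega) hcon
  have hPval : ∀ i : Fin n, μ i (P i) = ENNReal.ofReal (d i) := by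
    intro i
    have hsub2 : f (F (i:ℕ)) ⊆ f (F ((i:ℕ)+1)) := hfmono (hFmono (Nat.le_succ _))
    have hv1 : ν i (f (F ((i:ℕ)+1))) = ENNReal.ofReal (F ((i:ℕ)+1)) * ENNReal.ofReal D := by
      rw [hfval _ (hFmem _ i.isLt) i, hνX i]
    have hv2 : ν i (f (F (i:ℕ))) = ENNReal.ofReal (F (i:ℕ)) * ENNReal.ofReal D := by
      rw [hfval _ (hFmem _ i.isLt.le) i, hνX i]
    have hμν : μ i (P i) = ν i (P i) := by
      show _ = (μ i).restrict X (P i)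
      rw [Measure.restrict_apply (hPm i), inter_eq_self_of_subset_left (hPX i)]
    rw [hμν]
    have hdiff : ν i (P i)
        = ENNReal.ofReal (F ((i:ℕ)+1)) * ENNReal.ofReal D
          - ENNReal.ofReal (F (i:ℕ)) * ENNReal.ofReal D := by
      rw [← hv1, ← hv2]
      exact measure_diff hsub2 (hfmeas _).nullMeasurableSet (measure_ne_top _ _)
    have key : ENNReal.ofReal (F ((i:ℕ)+1)) * ENNReal.ofReal D
        = ENNReal.ofReal (d i) + ENNReal.ofReal (F (i:ℕ)) * ENNReal.ofReal D := by
      have e : F ((i:ℕ)+1) * D = d i + F (i:ℕ) * D := by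
        rw [hFsucc i]; ring
      rw [← ENNReal.ofReal_mul (hFnonneg _), ← ENNReal.ofReal_mul (hFnonneg _), e,
        ENNReal.ofReal_add (hd i).le (mul_nonneg (hFnonneg _) hD.le)]
    rw [hdiff, key, ENNReal.add_sub_cancel_right (by finiteness)]
  exact ⟨P, hPm, hPX, hPdisj, hPcover, fun i => (hPval i).ge⟩
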